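/- Let n = K·m for positive integers K, m, let μ ∈ ℝⁿ and σ > 0, and let g be a random vector in ℝⁿ whose coordinates are independent with g_i ~ N(μ_i, σ²). Partition {1,…,n} into K consecutive blocks of length m. Let e be a random vector in ℝⁿ, independent of g, with i.i.d. coordinates uniform on [-Δ/2, Δ/2], and define g̃ᴷ blockwise: on block j, g̃ᴷ = g⁽ʲ⁾ + ‖g⁽ʲ⁾‖_∞ · e⁽ʲ⁾, where g⁽ʲ⁾ and e⁽ʲ⁾ denote the restrictions of g and e to block j. Then E[‖g̃ᴷ − μ‖₂²] − E[‖g − μ‖₂²] ≤ (Δ²/6)·[ 2·ln(√2·n/K)·E[‖g − μ‖₂²] + n·‖μ‖_∞² ]. -/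

import Mathlib

open MeasureTheory ProbabilityTheory

/-- The uniform probability distribution on the interval `[a, b]`. -/
noncomputable def uniformIcc (a b : ℝ) : Measure ℝ := volume[|Set.Icc a b]

open Real Set Filter
open scoped NNReal ENNReal

lemma integrable_sq_mul_exp_neg_mul_sq {b : ℝ} (hb : 0 < b) :
    Integrable (fun x : ℝ => x ^ 2 * Real.exp (-b * x ^ 2)) := by
  have h := integrable_rpow_mul_exp_neg_mul_sq hb (s := 2) (by norm_num)
  have e : ∀ x : ℝ, x ^ (2:ℝ) = x ^ (2:ℕ) := fun x => by
    rw [show (2:ℝ) = ((2:ℕ):ℝ) by norm_num, Real.rpow_natCast]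
  simpa [e] using h

lemma tendsto_mul_exp_neg_mul_sq {b : ℝ} (hb : 0 < b) :
    Tendsto (fun x => x * Real.exp (-b * x^2)) atTop (nhds 0) := by
  have h := rpow_mul_exp_neg_mul_sq_isLittleO_exp_neg hb 1
  simp only [Real.rpow_one] at h
  refine h.isBigO.trans_tendsto ?_
  rw [Real.tendsto_exp_comp_nhds_zero]
  have h2 : Tendsto (fun x : ℝ => (1/2) * x) atTop atTop :=
    Tendsto.const_mul_atTop (by norm_num) tendsto_id
  have h3 := Filter.tendsto_neg_atTop_atBot.comp h2
  have : (HMul.hMul (-2⁻¹ : ℝ)) = (Neg.neg ∘ fun x : ℝ => 2⁻¹ * x) := by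
    funext x; show -2⁻¹ * x = -(2⁻¹ * x); ring
  simpa [this] using h3

lemma integral_Ioi_sq_exp {b : ℝ} (hb : 0 < b) :
    ∫ x in Ioi (0:ℝ), x^2 * Real.exp (-b * x^2) = Real.sqrt (π / b) / (4 * b) := by
  have hint2 : IntegrableOn (fun x : ℝ => x^2 * Real.exp (-b*x^2)) (Ioi 0) :=
    (integrable_sq_mul_exp_neg_mul_sq hb).integrableOn
  have hint1 : IntegrableOn (fun x : ℝ => (2*b)⁻¹ * Real.exp (-b*x^2)) (Ioi 0) :=
    ((integrable_exp_neg_mul_sq hb).const_mul _).integrableOn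
  have key : ∫ x in Ioi (0:ℝ),
      (x^2 * Real.exp (-b*x^2) - (2*b)⁻¹ * Real.exp (-b*x^2)) = 0 - (-(0/(2*b)) * Real.exp (-b*0^2)) := by
    apply integral_Ioi_of_hasDerivAt_of_tendsto'
      (f := fun x => -(x/(2*b)) * Real.exp (-b*x^2))
    · intro x _
      have h1 : HasDerivAt (fun x : ℝ => -(x/(2*b))) (-(1/(2*b))) x :=
        ((hasDerivAt_id x).div_const (2*b)).neg
      have h2 : HasDerivAt (fun x : ℝ => Real.exp (-b*x^2)) (Real.exp (-b*x^2) * (-b * (2*x))) x := by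
        have : HasDerivAt (fun x : ℝ => -b*x^2) (-b * (2*x)) x := by
          simpa using ((hasDerivAt_pow 2 x).const_mul (-b))
        exact this.exp
      convert h1.fun_mul h2 using 1
      · rfl
      field_simp
      ring
    · exact hint2.sub hint1
    · have heq : (fun x : ℝ => -(x/(2*b)) * Real.exp (-b*x^2))
          = fun x => -((x * Real.exp (-b*x^2)) / (2*b)) := by funext x; ring
      rw [heq]
      simpa using ((tendsto_mul_exp_neg_mul_sq hb).div_const (2*b)).neg
  rw [integral_sub hint2 hint1, integral_const_mul, integral_gaussian_Ioi] at key
  have hb' : (2*b) ≠ 0 := by positivity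
  field_simp at key ⊢
  have e : ∀ a : ℝ, a^2*b = b*a^2 := fun a => mul_comm _ _
  simp only [e] at key
  linarith

lemma integral_sq_exp_neg_mul_sq {b : ℝ} (hb : 0 < b) :
    ∫ x : ℝ, x^2 * Real.exp (-b * x^2) = Real.sqrt (π / b) / (2 * b) := by
  have hfull := integrable_sq_mul_exp_neg_mul_sq hb
  have hsplit : ∫ x : ℝ, x^2 * Real.exp (-b * x^2)
      = (∫ x in Iic (0:ℝ), x^2 * Real.exp (-b * x^2)) + ∫ x in Ioi (0:ℝ), x^2 * Real.exp (-b * x^2) := by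
    rw [← setIntegral_union (Iic_disjoint_Ioi le_rfl) measurableSet_Ioi
      hfull.integrableOn hfull.integrableOn, Iic_union_Ioi, setIntegral_univ]
  have heven : (∫ x in Iic (0:ℝ), x^2 * Real.exp (-b * x^2))
      = ∫ x in Ioi (0:ℝ), x^2 * Real.exp (-b * x^2) := by
    have hcn : ∫ x in Ioi (0:ℝ), ((-x)^2 * Real.exp (-b * (-x)^2))
        = ∫ x in Iic (-(0:ℝ)), x^2 * Real.exp (-b * x^2) := integral_comp_neg_Ioi 0 (fun x => x^2 * Real.exp (-b * x^2))
    rw [neg_zero] at hcn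
    rw [← hcn]
    simp
  rw [hsplit, heven, integral_Ioi_sq_exp hb]
  ring

lemma gaussianPDF_eq_coe_toNNReal (μ : ℝ) (v : ℝ≥0) :
    gaussianPDF μ v = fun x => ((Real.toNNReal (gaussianPDFReal μ v x) : ℝ≥0) : ℝ≥0∞) := rfl

lemma integral_gaussianReal_eq {μ : ℝ} {v : ℝ≥0} (hv : v ≠ 0) (f : ℝ → ℝ) :
    ∫ x, f x ∂(gaussianReal μ v) = ∫ x, gaussianPDFReal μ v x * f x := by
  rw [gaussianReal_of_var_ne_zero _ hv, gaussianPDF_eq_coe_toNNReal,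
    integral_withDensity_eq_integral_smul ((measurable_gaussianPDFReal μ v).real_toNNReal) f]
  congr 1; funext x
  rw [NNReal.smul_def, smul_eq_mul, Real.coe_toNNReal _ (gaussianPDFReal_nonneg μ v x)]

lemma integrable_gaussianReal_iff {μ : ℝ} {v : ℝ≥0} (hv : v ≠ 0) (f : ℝ → ℝ) :
    Integrable f (gaussianReal μ v) ↔ Integrable (fun x => gaussianPDFReal μ v x * f x) volume := by
  rw [gaussianReal_of_var_ne_zero _ hv, gaussianPDF_eq_coe_toNNReal,
    integrable_withDensity_iff_integrable_smul ((measurable_gaussianPDFReal μ v).real_toNNReal)]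
  apply integrable_congr
  filter_upwards with x
  rw [NNReal.smul_def, smul_eq_mul, Real.coe_toNNReal _ (gaussianPDFReal_nonneg μ v x)]

lemma toNNReal_sq_ne_zero {σ : ℝ} (hσ : 0 < σ) : Real.toNNReal (σ^2) ≠ 0 := by
  simp only [ne_eq, Real.toNNReal_eq_zero, not_le]
  positivity

lemma coe_toNNReal_sq {σ : ℝ} (hσ : 0 < σ) : ((Real.toNNReal (σ^2) : ℝ≥0) : ℝ) = σ^2 :=
  Real.coe_toNNReal _ (sq_nonneg σ)

lemma integral_gaussianReal_sub_sq (μ : ℝ) {σ : ℝ} (hσ : 0 < σ) :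
    ∫ x, (x - μ)^2 ∂(gaussianReal μ (Real.toNNReal (σ^2))) = σ^2 := by
  rw [integral_gaussianReal_eq (toNNReal_sq_ne_zero hσ)]
  have hσ2 : (0:ℝ) < σ^2 := by positivity
  have hb : (0:ℝ) < (2*σ^2)⁻¹ := by positivity
  have heq : (fun x => gaussianPDFReal μ (Real.toNNReal (σ^2)) x * (x - μ)^2)
      = fun x => (√(2 * π * σ^2))⁻¹ * ((x-μ)^2 * Real.exp (-(2*σ^2)⁻¹ * (x-μ)^2)) := by
    funext x
    rw [gaussianPDFReal, coe_toNNReal_sq hσ]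
    rw [show -(x - μ)^2 / (2 * σ^2) = -(2*σ^2)⁻¹ * (x-μ)^2 by ring]
    ring
  rw [heq, integral_const_mul, integral_sub_right_eq_self
    (fun y => y^2 * Real.exp (-(2*σ^2)⁻¹ * y^2)) μ, integral_sq_exp_neg_mul_sq hb]
  have h1 : π / (2*σ^2)⁻¹ = 2 * π * σ^2 := by field_simp
  rw [h1]
  have h2 : (0:ℝ) < 2 * π * σ^2 := by positivity
  have h3 : √(2 * π * σ^2) ≠ 0 := by positivity
  field_simp

lemma exp_quarter_mul_pdf (μ : ℝ) {σ : ℝ} (hσ : 0 < σ) :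
    (fun x => gaussianPDFReal μ (Real.toNNReal (σ^2)) x * Real.exp (x^2/(4*σ^2)))
      = fun x => ((√(2 * π * σ^2))⁻¹ * Real.exp (μ^2/(2*σ^2)))
          * Real.exp (-(4*σ^2)⁻¹ * (x - 2*μ)^2) := by
  funext x
  rw [gaussianPDFReal, coe_toNNReal_sq hσ]
  set c : ℝ := (√(2 * π * σ^2))⁻¹ with hc
  rw [mul_assoc, ← Real.exp_add, mul_assoc, ← Real.exp_add]
  congr 2
  have hσ2 : σ^2 ≠ 0 := by positivity
  field_simp
  ring

lemma integrable_exp_quarter_sq_gaussianReal (μ : ℝ) {σ : ℝ} (hσ : 0 < σ) :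
    Integrable (fun x => Real.exp (x^2/(4*σ^2))) (gaussianReal μ (Real.toNNReal (σ^2))) := by
  rw [integrable_gaussianReal_iff (toNNReal_sq_ne_zero hσ), exp_quarter_mul_pdf μ hσ]
  have hb : (0:ℝ) < (4*σ^2)⁻¹ := by positivity
  exact ((integrable_exp_neg_mul_sq hb).comp_sub_right (2*μ)).const_mul _

lemma integral_exp_quarter_sq_gaussianReal (μ : ℝ) {σ : ℝ} (hσ : 0 < σ) :
    ∫ x, Real.exp (x^2/(4*σ^2)) ∂(gaussianReal μ (Real.toNNReal (σ^2)))
      = Real.sqrt 2 * Real.exp (μ^2/(2*σ^2)) := by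
  rw [integral_gaussianReal_eq (toNNReal_sq_ne_zero hσ), exp_quarter_mul_pdf μ hσ,
    integral_const_mul, integral_sub_right_eq_self (fun y => Real.exp (-(4*σ^2)⁻¹ * y^2)) (2*μ)]
  have hb : (0:ℝ) < (4*σ^2)⁻¹ := by positivity
  rw [integral_gaussian]
  have h1 : π / (4*σ^2)⁻¹ = 2 * (2 * π * σ^2) := by field_simp; ring
  rw [h1, Real.sqrt_mul (by norm_num : (0:ℝ) ≤ 2)]
  have h2 : (0:ℝ) < 2 * π * σ^2 := by positivity
  have h3 : √(2 * π * σ^2) ≠ 0 := by positivity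
  field_simp

section Unif
variable {Δ : ℝ}

lemma unif_volume (hΔ : 0 < Δ) :
    (volume (Set.Icc (-(Δ/2)) (Δ/2))) = ENNReal.ofReal Δ := by
  rw [Real.volume_Icc]
  norm_num

lemma unif_isProb (hΔ : 0 < Δ) :
    IsProbabilityMeasure (uniformIcc (-(Δ/2)) (Δ/2)) := by
  refine cond_isProbabilityMeasure_of_finite ?_ ?_ <;> rw [unif_volume hΔ]
  · exact (ENNReal.ofReal_pos.mpr hΔ).ne'
  · exact ENNReal.ofReal_ne_top

lemma unif_integral (hΔ : 0 < Δ) (f : ℝ → ℝ) :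
    ∫ x, f x ∂(uniformIcc (-(Δ/2)) (Δ/2)) = Δ⁻¹ * ∫ x in (-(Δ/2))..(Δ/2), f x := by
  rw [uniformIcc, ProbabilityTheory.cond, integral_smul_measure, unif_volume hΔ,
    intervalIntegral.integral_of_le (by linarith : -(Δ/2) ≤ Δ/2),
    ← integral_Icc_eq_integral_Ioc]
  rw [ENNReal.toReal_inv, ENNReal.toReal_ofReal hΔ.le, smul_eq_mul]

lemma unif_moment_one (hΔ : 0 < Δ) :
    ∫ x, x ∂(uniformIcc (-(Δ/2)) (Δ/2)) = 0 := by
  rw [unif_integral hΔ, integral_id]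
  ring

lemma unif_moment_two (hΔ : 0 < Δ) :
    ∫ x, x^2 ∂(uniformIcc (-(Δ/2)) (Δ/2)) = Δ^2 / 12 := by
  rw [unif_integral hΔ, integral_pow]
  field_simp
  ring

lemma unif_ae_mem (hΔ : 0 < Δ) :
    (uniformIcc (-(Δ/2)) (Δ/2)) (Set.Icc (-(Δ/2)) (Δ/2))ᶜ = 0 := by
  rw [uniformIcc, ProbabilityTheory.cond, Measure.smul_apply,
    Measure.restrict_apply (measurableSet_Icc.compl)]
  simp

end Unif

lemma exists_norm_eq_abs {m : ℕ} (hm : 0 < m) (x : Fin m → ℝ) : ∃ i, ‖x‖ = |x i| := by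
  haveI : Nonempty (Fin m) := Fin.pos_iff_nonempty.mp hm
  obtain ⟨i, _, hi⟩ := Finset.exists_mem_eq_sup (Finset.univ : Finset (Fin m))
    Finset.univ_nonempty (fun i => ‖x i‖₊)
  refine ⟨i, ?_⟩
  rw [← Real.norm_eq_abs, ← coe_nnnorm, ← coe_nnnorm, Pi.nnnorm_def, hi]

lemma sq_norm_le_sum {m : ℕ} (hm : 0 < m) (x : Fin m → ℝ) : ‖x‖^2 ≤ ∑ i, (x i)^2 := by
  obtain ⟨i, hi⟩ := exists_norm_eq_abs hm x
  rw [hi, sq_abs]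
  exact Finset.single_le_sum (fun j _ => sq_nonneg (x j)) (Finset.mem_univ i)

lemma block_max_bound {Ω : Type*} [MeasurableSpace Ω] (P : Measure Ω) [IsProbabilityMeasure P]
    {m : ℕ} (hm : 0 < m) {σ : ℝ} (hσ : 0 < σ) (X : Ω → Fin m → ℝ) (hX : Measurable X)
    (μ : Fin m → ℝ)
    (hLaw : ∀ i, Measure.map (fun ω => X ω i) P = gaussianReal (μ i) (Real.toNNReal (σ^2)))
    (R : ℝ) (hR : ∀ i, |μ i| ≤ R) :
    Integrable (fun ω => ‖X ω‖^2) P ∧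
      ∫ ω, ‖X ω‖^2 ∂P ≤ 4*σ^2*Real.log (Real.sqrt 2 * m) + 2*R^2 := by
  have hσ2 : (0:ℝ) < σ^2 := by positivity
  have hXi : ∀ i : Fin m, Measurable (fun ω => X ω i) :=
    fun i => (measurable_pi_apply i).comp hX
  -- integrability of exp((X ω i)^2 / (4σ^2))
  have hexpXi : ∀ i : Fin m, Integrable (fun ω => Real.exp ((X ω i)^2/(4*σ^2))) P := by
    intro i
    have h := integrable_exp_quarter_sq_gaussianReal (μ i) hσ
    rw [← hLaw i, integrable_map_measure h.aestronglyMeasurable (hXi i).aemeasurable] at h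
    exact h
  have hintexpXi : ∀ i : Fin m, ∫ ω, Real.exp ((X ω i)^2/(4*σ^2)) ∂P
      = Real.sqrt 2 * Real.exp ((μ i)^2/(2*σ^2)) := by
    intro i
    rw [← integral_exp_quarter_sq_gaussianReal (μ i) hσ, ← hLaw i,
      integral_map (hXi i).aemeasurable]
    exact (Real.measurable_exp.comp ((measurable_id.pow_const 2).div_const _)).aestronglyMeasurable
  -- integrability of (X ω i)^2
  have hXi2 : ∀ i : Fin m, Integrable (fun ω => (X ω i)^2) P := by
    intro i
    refine Integrable.mono' ((hexpXi i).const_mul (4*σ^2)) (((hXi i).pow_const 2).aestronglyMeasurable) ?_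
    filter_upwards with ω
    rw [Real.norm_eq_abs, abs_of_nonneg (sq_nonneg _)]
    have h := Real.add_one_le_exp ((X ω i)^2/(4*σ^2))
    have h2 : (X ω i)^2/(4*σ^2) ≤ Real.exp ((X ω i)^2/(4*σ^2)) := by
      nlinarith [div_nonneg (sq_nonneg (X ω i)) (by positivity : (0:ℝ) ≤ 4*σ^2)]
    calc (X ω i)^2 = (4*σ^2) * ((X ω i)^2/(4*σ^2)) := by field_simp
    _ ≤ 4*σ^2 * Real.exp ((X ω i)^2/(4*σ^2)) := by
        exact mul_le_mul_of_nonneg_left h2 (by positivity)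
  -- integrability of ‖X ω‖^2
  have hnormmeas : Measurable (fun ω => ‖X ω‖^2) := (hX.norm.pow_const 2)
  have hnorm2 : Integrable (fun ω => ‖X ω‖^2) P := by
    refine Integrable.mono' (integrable_finset_sum Finset.univ (fun i _ => hXi2 i))
      hnormmeas.aestronglyMeasurable ?_
    filter_upwards with ω
    rw [Real.norm_eq_abs, abs_of_nonneg (sq_nonneg _)]
    exact sq_norm_le_sum hm (X ω)
  refine ⟨hnorm2, ?_⟩
  -- Jensen
  have hfi : Integrable (fun ω => ‖X ω‖^2/(4*σ^2)) P := hnorm2.div_const _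
  have hptwise : ∀ ω, Real.exp (‖X ω‖^2/(4*σ^2)) ≤ ∑ i, Real.exp ((X ω i)^2/(4*σ^2)) := by
    intro ω
    obtain ⟨i, hi⟩ := exists_norm_eq_abs hm (X ω)
    rw [hi, sq_abs]
    exact Finset.single_le_sum (f := fun j => Real.exp ((X ω j)^2/(4*σ^2)))
      (fun j _ => (Real.exp_pos _).le) (Finset.mem_univ i)
  have hgi : Integrable (fun ω => Real.exp (‖X ω‖^2/(4*σ^2))) P := by
    refine Integrable.mono' (integrable_finset_sum Finset.univ (fun i _ => hexpXi i))
      (Real.measurable_exp.comp (hnormmeas.div_const _)).aestronglyMeasurable ?_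
    filter_upwards with ω
    rw [Real.norm_eq_abs, abs_of_nonneg (Real.exp_pos _).le]
    exact hptwise ω
  have hjensen := convexOn_exp.map_integral_le Real.continuous_exp.continuousOn
    isClosed_univ (f := fun ω => ‖X ω‖^2/(4*σ^2)) (μ := P)
    (Filter.Eventually.of_forall (fun ω => Set.mem_univ _)) hfi hgi
  have hsum : ∫ ω, Real.exp (‖X ω‖^2/(4*σ^2)) ∂P
      ≤ (m : ℝ) * (Real.sqrt 2 * Real.exp (R^2/(2*σ^2))) := by
    calc ∫ ω, Real.exp (‖X ω‖^2/(4*σ^2)) ∂P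
        ≤ ∫ ω, ∑ i, Real.exp ((X ω i)^2/(4*σ^2)) ∂P :=
          integral_mono hgi (integrable_finset_sum Finset.univ (fun i _ => hexpXi i)) hptwise
    _ = ∑ i, ∫ ω, Real.exp ((X ω i)^2/(4*σ^2)) ∂P :=
          integral_finset_sum Finset.univ (fun i _ => hexpXi i)
    _ ≤ ∑ i : Fin m, Real.sqrt 2 * Real.exp (R^2/(2*σ^2)) := by
          refine Finset.sum_le_sum (fun i _ => ?_)
          rw [hintexpXi i]
          have : (μ i)^2 ≤ R^2 := sq_le_sq' (neg_le_of_abs_le (hR i)) (le_of_abs_le (hR i))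
          have h2 : (μ i)^2/(2*σ^2) ≤ R^2/(2*σ^2) :=
            div_le_div_of_nonneg_right this (by positivity)
          exact mul_le_mul_of_nonneg_left (Real.exp_le_exp.mpr h2) (Real.sqrt_nonneg 2)
    _ = (m : ℝ) * (Real.sqrt 2 * Real.exp (R^2/(2*σ^2))) := by
          rw [Finset.sum_const, Finset.card_univ, Fintype.card_fin, nsmul_eq_mul]
  have hm' : (0:ℝ) < m := Nat.cast_pos.mpr hm
  have hb : (0:ℝ) < (m:ℝ) * (Real.sqrt 2 * Real.exp (R^2/(2*σ^2))) := by positivity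
  have hle : (∫ ω, ‖X ω‖^2 ∂P)/(4*σ^2)
      ≤ Real.log ((m:ℝ) * (Real.sqrt 2 * Real.exp (R^2/(2*σ^2)))) := by
    rw [Real.le_log_iff_exp_le hb, ← integral_div]
    exact hjensen.trans hsum
  have hlog : Real.log ((m:ℝ) * (Real.sqrt 2 * Real.exp (R^2/(2*σ^2))))
      = Real.log (Real.sqrt 2 * m) + R^2/(2*σ^2) := by
    rw [Real.log_mul hm'.ne' (by positivity), Real.log_mul (by positivity) (Real.exp_ne_zero _),
      Real.log_exp, Real.log_mul (by positivity) hm'.ne']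
    ring
  rw [hlog] at hle
  have h4 : (0:ℝ) < 4*σ^2 := by positivity
  have hfin := (div_le_iff₀ h4).mp hle
  have hq : (Real.log (Real.sqrt 2 * m) + R^2/(2*σ^2)) * (4*σ^2)
      = 4*σ^2*Real.log (Real.sqrt 2 * m) + 2*R^2 := by
    field_simp
    ring
  linarith


lemma integrable_sq_gaussianReal (μ : ℝ) {σ : ℝ} (hσ : 0 < σ) :
    Integrable (fun x : ℝ => x^2) (gaussianReal μ (Real.toNNReal (σ^2))) := by
  refine Integrable.mono' ((integrable_exp_quarter_sq_gaussianReal μ hσ).const_mul (4*σ^2))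
    ((measurable_id.pow_const 2).aestronglyMeasurable) ?_
  filter_upwards with x
  rw [Real.norm_eq_abs, abs_of_nonneg (sq_nonneg _)]
  have h2 : x^2/(4*σ^2) ≤ Real.exp (x^2/(4*σ^2)) := by
    have := Real.add_one_le_exp (x^2/(4*σ^2))
    nlinarith [div_nonneg (sq_nonneg x) (by positivity : (0:ℝ) ≤ 4*σ^2)]
  calc x^2 = (4*σ^2) * (x^2/(4*σ^2)) := by field_simp
  _ ≤ 4*σ^2 * Real.exp (x^2/(4*σ^2)) := mul_le_mul_of_nonneg_left h2 (by positivity)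

lemma integrable_sub_sq_gaussianReal (μ c : ℝ) {σ : ℝ} (hσ : 0 < σ) :
    Integrable (fun x : ℝ => (x - c)^2) (gaussianReal μ (Real.toNNReal (σ^2))) := by
  have h := ((integrable_sq_gaussianReal μ hσ).const_mul 2).add
    (integrable_const (μ := gaussianReal μ (Real.toNNReal (σ^2))) (2*c^2))
  refine Integrable.mono' h (((measurable_id.sub_const c).pow_const 2).aestronglyMeasurable) ?_
  filter_upwards with x
  rw [Real.norm_eq_abs, abs_of_nonneg (sq_nonneg _)]
  simp only [Pi.add_apply]
  nlinarith [sq_nonneg (x + c)]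

/-- **Excess variance of blockwise (partitioned) dithered quantization (eq. (4)).**
A vector in `ℝⁿ` with `n = K·m` is represented blockwise as an element of
`Fin K → Fin m → ℝ` (`K` consecutive blocks of length `m`).  If the `n` coordinates of
`g` are independent with `g_{j,i} ~ N(μ_{j,i}, σ²)`, and `e` is independent of `g` with
i.i.d. coordinates uniform on `[-Δ/2, Δ/2]`, then the blockwise DQSG, which on block `j`
equals `g⁽ʲ⁾ + ‖g⁽ʲ⁾‖_∞ • e⁽ʲ⁾`, satisfies
`E[‖g̃ᴷ − μ‖₂²] − E[‖g − μ‖₂²]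
   ≤ (Δ²/6)·(2·ln(√2·n/K)·E[‖g − μ‖₂²] + n·‖μ‖_∞²)`.
(The norm `‖g ω j‖` on a block `Fin m → ℝ` is the sup norm, and `‖μ‖` is the sup norm
over all `n` coordinates; squared Euclidean norms are sums of squares.) -/
theorem dqsg_partitioned_excess_variance_gaussian
    {Ω : Type*} [MeasurableSpace Ω] (P : Measure Ω) [IsProbabilityMeasure P]
    (K m : ℕ) (hK : 0 < K) (hm : 0 < m) (n : ℕ) (hn : n = K * m)
    (Δ : ℝ) (hΔ : 0 < Δ) (σ : ℝ) (hσ : 0 < σ)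
    (g e : Ω → (Fin K → Fin m → ℝ)) (hg : Measurable g) (he : Measurable e)
    (μ : Fin K → Fin m → ℝ)
    (hgIndep : iIndepFun
      (fun (p : Fin K × Fin m) ω => g ω p.1 p.2) P)
    (hgLaw : ∀ (p : Fin K × Fin m),
      Measure.map (fun ω => g ω p.1 p.2) P = gaussianReal (μ p.1 p.2) (Real.toNNReal (σ ^ 2)))
    (hindep : IndepFun g e P)
    (heIndep : iIndepFun
      (fun (p : Fin K × Fin m) ω => e ω p.1 p.2) P)
    (heLaw : ∀ (p : Fin K × Fin m),
      Measure.map (fun ω => e ω p.1 p.2) P = uniformIcc (-(Δ / 2)) (Δ / 2)) :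
    (∫ ω, ∑ j, ∑ i, (g ω j i + ‖g ω j‖ * e ω j i - μ j i) ^ 2 ∂P)
        - (∫ ω, ∑ j, ∑ i, (g ω j i - μ j i) ^ 2 ∂P)
      ≤ Δ ^ 2 / 6 *
          (2 * Real.log (Real.sqrt 2 * n / K) * (∫ ω, ∑ j, ∑ i, (g ω j i - μ j i) ^ 2 ∂P)
            + n * ‖μ‖ ^ 2) := by
  -- basic measurability
  have hgj : ∀ j, Measurable (fun ω => g ω j) := fun j => (measurable_pi_apply j).comp hg
  have hXji : ∀ (j : Fin K) (i : Fin m), Measurable (fun ω => g ω j i) :=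
    fun j i => (measurable_pi_apply i).comp (hgj j)
  have hEji : ∀ (j : Fin K) (i : Fin m), Measurable (fun ω => e ω j i) :=
    fun j i => (measurable_pi_apply i).comp ((measurable_pi_apply j).comp he)
  have hBj : ∀ j, Measurable (fun ω => ‖g ω j‖) := fun j => (hgj j).norm
  have hAmeas : ∀ (j : Fin K) (i : Fin m), Measurable (fun ω => g ω j i - μ j i) :=
    fun j i => (hXji j i).sub_const _
  -- block bound
  have hR : ∀ (j : Fin K) (i : Fin m), |μ j i| ≤ ‖μ‖ := by
    intro j i
    calc |μ j i| = ‖μ j i‖ := (Real.norm_eq_abs _).symm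
    _ ≤ ‖μ j‖ := norm_le_pi_norm (μ j) i
    _ ≤ ‖μ‖ := norm_le_pi_norm μ j
  have hblock : ∀ j : Fin K, Integrable (fun ω => ‖g ω j‖^2) P ∧
      ∫ ω, ‖g ω j‖^2 ∂P ≤ 4*σ^2*Real.log (Real.sqrt 2 * m) + 2*‖μ‖^2 := by
    intro j
    exact block_max_bound P hm hσ (fun ω => g ω j) (hgj j) (μ j)
      (fun i => hgLaw (j, i)) ‖μ‖ (fun i => hR j i)
  have hB2 : ∀ j, Integrable (fun ω => ‖g ω j‖^2) P := fun j => (hblock j).1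
  -- uniform coordinates: boundedness and moments
  have hEae : ∀ (j : Fin K) (i : Fin m), ∀ᵐ ω ∂P, |e ω j i| ≤ Δ/2 := by
    intro j i
    have h0 : P ((fun ω => e ω j i) ⁻¹' (Set.Icc (-(Δ/2)) (Δ/2))ᶜ) = 0 := by
      rw [← Measure.map_apply (hEji j i) measurableSet_Icc.compl, heLaw (j,i)]
      exact unif_ae_mem hΔ
    have h1 : ∀ᵐ ω ∂P, e ω j i ∈ Set.Icc (-(Δ/2)) (Δ/2) := by
      rw [ae_iff]
      convert h0 using 2
      rfl
    filter_upwards [h1] with ω hω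
    exact abs_le.mpr ⟨by linarith [hω.1], by linarith [hω.2]⟩
  have hE1 : ∀ (j : Fin K) (i : Fin m), ∫ ω, e ω j i ∂P = 0 := by
    intro j i
    have key : ∫ x, x ∂(Measure.map (fun ω => e ω j i) P) = 0 := by
      rw [heLaw (j,i)]; exact unif_moment_one hΔ
    rw [integral_map (hEji j i).aemeasurable (f := fun x => x) measurable_id.aestronglyMeasurable] at key
    exact key
  have hE2 : ∀ (j : Fin K) (i : Fin m), ∫ ω, (e ω j i)^2 ∂P = Δ^2/12 := by
    intro j i
    have key : ∫ x, x^2 ∂(Measure.map (fun ω => e ω j i) P) = Δ^2/12 := by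
      rw [heLaw (j,i)]; exact unif_moment_two hΔ
    rw [integral_map (hEji j i).aemeasurable (f := fun x => x^2)
      ((measurable_id.pow_const 2).aestronglyMeasurable)] at key
    exact key
  -- gaussian coordinates: integrability and moments
  have hA2 : ∀ (j : Fin K) (i : Fin m), Integrable (fun ω => (g ω j i - μ j i)^2) P := by
    intro j i
    have h := integrable_sub_sq_gaussianReal (μ j i) (μ j i) hσ
    rw [← hgLaw (j,i), integrable_map_measure h.aestronglyMeasurable
      (hXji j i).aemeasurable] at h
    exact h
  have hA2val : ∀ (j : Fin K) (i : Fin m), ∫ ω, (g ω j i - μ j i)^2 ∂P = σ^2 := by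
    intro j i
    have key : ∫ x, (x - μ j i)^2 ∂(Measure.map (fun ω => g ω j i) P) = σ^2 := by
      rw [hgLaw (j,i)]; exact integral_gaussianReal_sub_sq _ hσ
    rw [integral_map (hXji j i).aemeasurable (f := fun x => (x - μ j i)^2)
      (((measurable_id.sub_const _).pow_const 2).aestronglyMeasurable)] at key
    exact key
  -- integrability of product terms
  have hABmeas : ∀ (j : Fin K) (i : Fin m),
      Measurable (fun ω => (g ω j i - μ j i) * ‖g ω j‖) :=
    fun j i => (hAmeas j i).mul (hBj j)
  have hAB : ∀ (j : Fin K) (i : Fin m),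
      Integrable (fun ω => (g ω j i - μ j i) * ‖g ω j‖) P := by
    intro j i
    refine Integrable.mono' (((hA2 j i).add (hB2 j)).const_mul (1/2))
      (hABmeas j i).aestronglyMeasurable ?_
    filter_upwards with ω
    rw [Real.norm_eq_abs, abs_mul]
    have h1 : |g ω j i - μ j i| * |‖g ω j‖|
        ≤ 1/2 * ((g ω j i - μ j i)^2 + ‖g ω j‖^2) := by
      nlinarith [sq_nonneg (|g ω j i - μ j i| - |‖g ω j‖|), sq_abs (g ω j i - μ j i),
        sq_abs (‖g ω j‖), abs_nonneg (g ω j i - μ j i), abs_nonneg (‖g ω j‖)]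
    exact h1
  have hABE : ∀ (j : Fin K) (i : Fin m),
      Integrable (fun ω => (g ω j i - μ j i) * ‖g ω j‖ * e ω j i) P := by
    intro j i
    refine Integrable.mono' ((hAB j i).abs.const_mul (Δ/2))
      ((hABmeas j i).mul (hEji j i)).aestronglyMeasurable ?_
    filter_upwards [hEae j i] with ω hω
    rw [Real.norm_eq_abs, abs_mul]
    calc |(g ω j i - μ j i) * ‖g ω j‖| * |e ω j i|
        ≤ |(g ω j i - μ j i) * ‖g ω j‖| * (Δ/2) :=
          mul_le_mul_of_nonneg_left hω (abs_nonneg _)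
    _ = Δ/2 * |(g ω j i - μ j i) * ‖g ω j‖| := by ring
  have hB2E2 : ∀ (j : Fin K) (i : Fin m),
      Integrable (fun ω => ‖g ω j‖^2 * (e ω j i)^2) P := by
    intro j i
    refine Integrable.mono' ((hB2 j).const_mul ((Δ/2)^2))
      (((hBj j).pow_const 2).mul ((hEji j i).pow_const 2)).aestronglyMeasurable ?_
    filter_upwards [hEae j i] with ω hω
    rw [Real.norm_eq_abs, abs_of_nonneg (by positivity : (0:ℝ) ≤ ‖g ω j‖^2 * (e ω j i)^2)]
    have h2 : (e ω j i)^2 ≤ (Δ/2)^2 := by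
      rw [← sq_abs]
      exact pow_le_pow_left₀ (abs_nonneg _) hω 2
    calc ‖g ω j‖^2 * (e ω j i)^2 ≤ ‖g ω j‖^2 * (Δ/2)^2 :=
          mul_le_mul_of_nonneg_left h2 (sq_nonneg _)
    _ = (Δ/2)^2 * ‖g ω j‖^2 := by ring
  have hterm : ∀ (j : Fin K) (i : Fin m),
      Integrable (fun ω => 2 * ((g ω j i - μ j i) * ‖g ω j‖ * e ω j i)
        + ‖g ω j‖^2 * (e ω j i)^2) P :=
    fun j i => ((hABE j i).const_mul 2).add (hB2E2 j i)
  have hF : Integrable (fun ω => ∑ j, ∑ i, (2 * ((g ω j i - μ j i) * ‖g ω j‖ * e ω j i)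
      + ‖g ω j‖^2 * (e ω j i)^2)) P :=
    integrable_finset_sum _ (fun j _ =>
      integrable_finset_sum _ (fun i _ => hterm j i))
  have hAsum : Integrable (fun ω => ∑ j, ∑ i, (g ω j i - μ j i)^2) P :=
    integrable_finset_sum _ (fun j _ =>
      integrable_finset_sum _ (fun i _ => hA2 j i))
  -- pointwise decomposition
  have hpt : ∀ ω, ∑ j, ∑ i, (g ω j i + ‖g ω j‖ * e ω j i - μ j i)^2
      = (∑ j, ∑ i, (g ω j i - μ j i)^2)
        + ∑ j, ∑ i, (2 * ((g ω j i - μ j i) * ‖g ω j‖ * e ω j i)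
          + ‖g ω j‖^2 * (e ω j i)^2) := by
    intro ω
    rw [← Finset.sum_add_distrib]
    refine Finset.sum_congr rfl (fun j _ => ?_)
    rw [← Finset.sum_add_distrib]
    refine Finset.sum_congr rfl (fun i _ => ?_)
    ring
  have hsplit : ∫ ω, ∑ j, ∑ i, (g ω j i + ‖g ω j‖ * e ω j i - μ j i)^2 ∂P
      = (∫ ω, ∑ j, ∑ i, (g ω j i - μ j i)^2 ∂P)
        + ∫ ω, ∑ j, ∑ i, (2 * ((g ω j i - μ j i) * ‖g ω j‖ * e ω j i)
          + ‖g ω j‖^2 * (e ω j i)^2) ∂P := by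
    rw [← integral_add hAsum hF]
    exact integral_congr_ae (Filter.Eventually.of_forall hpt)
  -- cross terms vanish
  have hcross : ∀ (j : Fin K) (i : Fin m),
      ∫ ω, (g ω j i - μ j i) * ‖g ω j‖ * e ω j i ∂P = 0 := by
    intro j i
    have hφ : Measurable (fun x : Fin K → Fin m → ℝ => (x j i - μ j i) * ‖x j‖) :=
      (((measurable_pi_apply i).comp (measurable_pi_apply j)).sub_const _).fun_mul
        (measurable_pi_apply j).norm
    have hψ : Measurable (fun y : Fin K → Fin m → ℝ => y j i) :=
      (measurable_pi_apply i).comp (measurable_pi_apply j)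
    have h := (hindep.comp hφ hψ).integral_fun_mul_eq_mul_integral
      ((hφ.comp hg).aestronglyMeasurable) ((hψ.comp he).aestronglyMeasurable)
    simp only [Function.comp_def] at h
    rw [h, hE1 j i, mul_zero]
  have hsqterm : ∀ (j : Fin K) (i : Fin m),
      ∫ ω, ‖g ω j‖^2 * (e ω j i)^2 ∂P = (∫ ω, ‖g ω j‖^2 ∂P) * (Δ^2/12) := by
    intro j i
    have hφ : Measurable (fun x : Fin K → Fin m → ℝ => ‖x j‖^2) :=
      (measurable_pi_apply j).norm.pow_const 2
    have hψ : Measurable (fun y : Fin K → Fin m → ℝ => (y j i)^2) :=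
      (((measurable_pi_apply i).comp (measurable_pi_apply j))).pow_const 2
    have h := (hindep.comp hφ hψ).integral_fun_mul_eq_mul_integral
      ((hφ.comp hg).aestronglyMeasurable) ((hψ.comp he).aestronglyMeasurable)
    simp only [Function.comp_def] at h
    rw [h, hE2 j i]
  -- value of the excess
  have hFval : ∫ ω, ∑ j, ∑ i, (2 * ((g ω j i - μ j i) * ‖g ω j‖ * e ω j i)
      + ‖g ω j‖^2 * (e ω j i)^2) ∂P
      = Δ^2/12 * ((m:ℝ) * ∑ j, ∫ ω, ‖g ω j‖^2 ∂P) := by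
    rw [integral_finset_sum _ (fun j _ => integrable_finset_sum _ (fun i _ => hterm j i))]
    have hjval : ∀ j : Fin K, ∫ ω, ∑ i, (2 * ((g ω j i - μ j i) * ‖g ω j‖ * e ω j i)
        + ‖g ω j‖^2 * (e ω j i)^2) ∂P = (m:ℝ) * ((∫ ω, ‖g ω j‖^2 ∂P) * (Δ^2/12)) := by
      intro j
      rw [integral_finset_sum _ (fun i _ => hterm j i)]
      have : ∀ i : Fin m, ∫ ω, (2 * ((g ω j i - μ j i) * ‖g ω j‖ * e ω j i)
          + ‖g ω j‖^2 * (e ω j i)^2) ∂P = (∫ ω, ‖g ω j‖^2 ∂P) * (Δ^2/12) := by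
        intro i
        rw [integral_add ((hABE j i).const_mul 2) (hB2E2 j i), integral_const_mul,
          hcross j i, hsqterm j i, mul_zero, zero_add]
      rw [Finset.sum_congr rfl (fun i _ => this i), Finset.sum_const, Finset.card_univ,
        Fintype.card_fin, nsmul_eq_mul]
    rw [Finset.sum_congr rfl (fun j _ => hjval j)]
    simp only [Finset.mul_sum]
    exact Finset.sum_congr rfl (fun j _ => by ring)
  have hIval : ∫ ω, ∑ j, ∑ i, (g ω j i - μ j i)^2 ∂P = (n:ℝ) * σ^2 := by
    rw [integral_finset_sum _ (fun j _ => integrable_finset_sum _ (fun i _ => hA2 j i))]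
    have hj : ∀ j : Fin K, ∫ ω, ∑ i, (g ω j i - μ j i)^2 ∂P = (m:ℝ) * σ^2 := by
      intro j
      rw [integral_finset_sum _ (fun i _ => hA2 j i),
        Finset.sum_congr rfl (fun i _ => hA2val j i), Finset.sum_const, Finset.card_univ,
        Fintype.card_fin, nsmul_eq_mul]
    rw [Finset.sum_congr rfl (fun j _ => hj j), Finset.sum_const, Finset.card_univ,
      Fintype.card_fin, nsmul_eq_mul, hn]
    push_cast
    ring
  have hnr : (n:ℝ) = (K:ℝ)*(m:ℝ) := by rw [hn]; push_cast; ring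
  have hKne : (K:ℝ) ≠ 0 := Nat.cast_ne_zero.mpr hK.ne'
  have hL : Real.log (Real.sqrt 2 * (n:ℝ) / K) = Real.log (Real.sqrt 2 * (m:ℝ)) := by
    congr 1
    rw [hnr]
    field_simp
  have hS : ∑ j, ∫ ω, ‖g ω j‖^2 ∂P
      ≤ (K:ℝ) * (4*σ^2*Real.log (Real.sqrt 2 * (m:ℝ)) + 2*‖μ‖^2) := by
    calc ∑ j, ∫ ω, ‖g ω j‖^2 ∂P
        ≤ ∑ _j : Fin K, (4*σ^2*Real.log (Real.sqrt 2 * (m:ℝ)) + 2*‖μ‖^2) :=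
          Finset.sum_le_sum (fun j _ => (hblock j).2)
    _ = (K:ℝ) * (4*σ^2*Real.log (Real.sqrt 2 * (m:ℝ)) + 2*‖μ‖^2) := by
          rw [Finset.sum_const, Finset.card_univ, Fintype.card_fin, nsmul_eq_mul]
  rw [hsplit, hFval, hIval, hL]
  have hfinal : Δ^2/12*((m:ℝ) * ∑ j, ∫ ω, ‖g ω j‖^2 ∂P)
      ≤ Δ^2/12*((m:ℝ)*((K:ℝ)*(4*σ^2*Real.log (Real.sqrt 2 * (m:ℝ))+2*‖μ‖^2))) :=
    mul_le_mul_of_nonneg_left (mul_le_mul_of_nonneg_left hS (Nat.cast_nonneg m))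
      (by positivity)
  have heq : Δ^2/12*((m:ℝ)*((K:ℝ)*(4*σ^2*Real.log (Real.sqrt 2 * (m:ℝ))+2*‖μ‖^2)))
      = Δ^2/6*(2*Real.log (Real.sqrt 2 * (m:ℝ))*((n:ℝ)*σ^2) + (n:ℝ)*‖μ‖^2) := by
    rw [hnr]; ring
  linarith
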